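/- Let $V_1,\ldots,V_r$ be subspaces of a finite-dimensional vector space $V$. There exists a system of linearly independent representatives, i.e., vectors $v_i \in V_i$ for each $i$ such that $v_1,\ldots,v_r$ are linearly independent, if and only if for every subset $I \subseteq \{1,\ldots,r\}$ one has $\dim\left(\sum_{i\in I} V_i\right) \geq |I|$. -/

import Mathlib

open Submodule Module

section aux

universe u v

variable {F : Type u} [Field F]

private lemma moshonkin_finrank_map_mkQ {V : Type v} [AddCommGroup V] [Module F V]
    [FiniteDimensional F V] (W p : Submodule F V) :
    finrank F ↥(p.map W.mkQ) + finrank F ↥W = finrank F ↥(p ⊔ W) := by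
  have hWmap : W.map W.mkQ = ⊥ := by
    exact Submodule.mkQ_map_self W
  have hrange : LinearMap.range (W.mkQ.comp (p ⊔ W).subtype) = p.map W.mkQ := by
    rw [LinearMap.range_comp, Submodule.range_subtype, Submodule.map_sup, hWmap, sup_bot_eq]
  have hker : LinearMap.ker (W.mkQ.comp (p ⊔ W).subtype) =
      Submodule.comap (p ⊔ W).subtype W := by
    rw [LinearMap.ker_comp, Submodule.ker_mkQ]
  have h := LinearMap.finrank_range_add_finrank_ker (W.mkQ.comp (p ⊔ W).subtype)
  rw [hrange, hker] at h
  rw [← h]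
  congr 1
  exact (Submodule.comapSubtypeEquivOfLe (le_sup_right : W ≤ p ⊔ W)).finrank_eq.symm

private lemma moshonkin_merge {V : Type v} [AddCommGroup V] [Module F V] {ι : Type*}
    [DecidableEq ι] (W : Submodule F V) (Vs : ι → Submodule F V) (s I : Finset ι)
    (hIs : I ⊆ s) (v w : ι → V)
    (hvV : ∀ i ∈ I, v i ∈ Vs i) (hvW : ∀ i ∈ I, v i ∈ W)
    (hvind : LinearIndependent F (fun i : ↥I => v i))
    (hwV : ∀ j ∈ s \ I, w j ∈ Vs j)
    (hwind : LinearIndependent F (fun j : ↥(s \ I) => W.mkQ (w j))) :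
    ∃ u : ι → V, (∀ i ∈ s, u i ∈ Vs i) ∧ LinearIndependent F (fun i : ↥s => u i) := by
  refine ⟨fun i => if i ∈ I then v i else w i, ?_, ?_⟩
  · intro i hi
    by_cases h : i ∈ I
    · simpa [h] using hvV i h
    · simpa [h] using hwV i (Finset.mem_sdiff.mpr ⟨hi, h⟩)
  · have hw' : LinearIndependent F (fun j : ↥(s \ I) => w j) :=
      LinearIndependent.of_comp W.mkQ hwind
    have hdisj : Disjoint (span F (Set.range fun j : ↥(s \ I) => w j)) W := by
      have := Submodule.range_ker_disjoint hwind
      rwa [Submodule.ker_mkQ] at this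
    have hspan : span F (Set.range fun i : ↥I => v i) ≤ W := by
      rw [Submodule.span_le]
      rintro _ ⟨i, rfl⟩
      exact hvW i i.2
    have hsum : LinearIndependent F
        (Sum.elim (fun i : ↥I => v i) (fun j : ↥(s \ I) => w j)) :=
      hvind.sum_type hw' ((hdisj.mono_right hspan).symm)
    let e : ↥I ⊕ ↥(s \ I) ≃ ↥s :=
      { toFun := Sum.elim (fun i => ⟨i, hIs i.2⟩)
          (fun j => ⟨j, (Finset.mem_sdiff.mp j.2).1⟩)
        invFun := fun x => if h : (x : ι) ∈ I then Sum.inl ⟨x, h⟩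
          else Sum.inr ⟨x, Finset.mem_sdiff.mpr ⟨x.2, h⟩⟩
        left_inv := by
          rintro (⟨i, hi⟩ | ⟨j, hj⟩)
          · simp [hi]
          · simp [(Finset.mem_sdiff.mp hj).2]
        right_inv := by
          rintro ⟨x, hx⟩
          by_cases h : x ∈ I <;> simp [h] }
    rw [← linearIndependent_equiv e]
    have heq : ((fun i : ↥s => if (i : ι) ∈ I then v i else w i) ∘ e) =
        Sum.elim (fun i : ↥I => v i) (fun j : ↥(s \ I) => w j) := by
      funext p
      rcases p with i | j
      · simp [e, i.2]
      · simp [e, (Finset.mem_sdiff.mp j.2).2]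
    rw [heq]
    exact hsum

private lemma moshonkin_aux {ι : Type*} [DecidableEq ι] (n : ℕ) :
    ∀ {V : Type v} [AddCommGroup V] [Module F V] [FiniteDimensional F V]
      (Vs : ι → Submodule F V) (s : Finset ι), s.card ≤ n →
      (∀ I ⊆ s, I.card ≤ finrank F ↥(⨆ i ∈ I, Vs i)) →
      ∃ v : ι → V, (∀ i ∈ s, v i ∈ Vs i) ∧ LinearIndependent F (fun i : ↥s => v i) := by
  induction n with
  | zero =>
    intro V _ _ _ Vs s hcard _
    obtain rfl : s = ∅ := Finset.card_eq_zero.mp (Nat.le_zero.mp hcard)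
    haveI : IsEmpty ↥(∅ : Finset ι) := ⟨fun x => absurd x.2 (Finset.notMem_empty _)⟩
    exact ⟨0, by simp, linearIndependent_empty_type⟩
  | succ n IH =>
    intro V _ _ _ Vs s hcard hyp
    rcases Finset.eq_empty_or_nonempty s with rfl | hs
    · haveI : IsEmpty ↥(∅ : Finset ι) := ⟨fun x => absurd x.2 (Finset.notMem_empty _)⟩
      exact ⟨0, by simp, linearIndependent_empty_type⟩
    by_cases hcrit : ∃ I, I ⊆ s ∧ I.Nonempty ∧ I ≠ s ∧
        finrank F ↥(⨆ i ∈ I, Vs i) ≤ I.card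
    · obtain ⟨I, hIs, hIne, hInes, hIle⟩ := hcrit
      set W := ⨆ i ∈ I, Vs i with hWdef
      have hIcard : I.card < s.card := Finset.card_lt_card ⟨hIs, fun h => hInes
        (Finset.Subset.antisymm hIs h)⟩
      obtain ⟨v, hvV, hvind⟩ := IH Vs I (by omega) (fun J hJ => hyp J (hJ.trans hIs))
      have hvW : ∀ i ∈ I, v i ∈ W := fun i hi =>
        (le_iSup₂ (f := fun i _ => Vs i) i hi : Vs i ≤ W) (hvV i hi)
      have hWcard : finrank F ↥W = I.card := le_antisymm hIle (hyp I hIs)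
      have hkey : ∀ J ⊆ s \ I, J.card ≤ finrank F ↥(⨆ i ∈ J, (Vs i).map W.mkQ) := by
        intro J hJ
        have hmap : (⨆ i ∈ J, (Vs i).map W.mkQ) = (⨆ i ∈ J, Vs i).map W.mkQ := by
          simp [Submodule.map_iSup]
        have h1 := moshonkin_finrank_map_mkQ W (⨆ i ∈ J, Vs i)
        have h2 : (⨆ i ∈ J, Vs i) ⊔ W = ⨆ i ∈ J ∪ I, Vs i :=
          (Finset.iSup_union (f := fun i => Vs i)).symm
        rw [h2] at h1
        have h3 := hyp (J ∪ I) (Finset.union_subset (hJ.trans Finset.sdiff_subset) hIs)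
        have h4 : (J ∪ I).card = J.card + I.card := Finset.card_union_of_disjoint
          (Finset.disjoint_left.mpr fun a ha => (Finset.mem_sdiff.mp (hJ ha)).2)
        rw [hmap]
        omega
      have hsd : (s \ I).card ≤ n := by
        have h5 := Finset.card_sdiff_of_subset hIs
        have h6 := hIne.card_pos
        omega
      obtain ⟨w, hwV, hwind⟩ := IH (fun i => (Vs i).map W.mkQ) (s \ I) hsd hkey
      have hlift : ∀ j ∈ s \ I, ∃ x, x ∈ Vs j ∧ W.mkQ x = w j := fun j hj => by
        simpa [Submodule.mem_map] using hwV j hj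
      choose! w' hw'1 hw'2 using hlift
      have hwind' : LinearIndependent F (fun j : ↥(s \ I) => W.mkQ (w' j)) := by
        have : (fun j : ↥(s \ I) => W.mkQ (w' j)) = fun j : ↥(s \ I) => w j := by
          funext j; exact hw'2 j j.2
        rw [this]; exact hwind
      exact moshonkin_merge W Vs s I hIs v w' hvV hvW hvind hw'1 hwind'
    · push_neg at hcrit
      obtain ⟨i0, hi0⟩ := hs
      have h1 : 1 ≤ finrank F ↥(Vs i0) := by
        have := hyp {i0} (Finset.singleton_subset_iff.mpr hi0)
        simpa using this
      have hne : Vs i0 ≠ ⊥ := by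
        intro h
        rw [h] at h1
        simp [finrank_bot] at h1
      obtain ⟨v0, hv0M, hv0⟩ := Submodule.exists_mem_ne_zero_of_ne_bot hne
      set W : Submodule F V := span F {v0} with hWdef
      have hWrank : finrank F ↥W = 1 := finrank_span_singleton hv0
      haveI : Unique ↥({i0} : Finset ι) :=
        ⟨⟨⟨i0, Finset.mem_singleton_self i0⟩⟩,
          fun x => Subtype.ext (Finset.mem_singleton.mp x.2)⟩
      have hvind : LinearIndependent F (fun _ : ↥({i0} : Finset ι) => v0) :=
        linearIndependent_unique_iff.mpr hv0
      have hkey : ∀ J ⊆ s \ {i0}, J.card ≤ finrank F ↥(⨆ i ∈ J, (Vs i).map W.mkQ) := by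
        intro J hJ
        rcases Finset.eq_empty_or_nonempty J with rfl | hJne
        · simp
        have hJs : J ⊆ s := hJ.trans Finset.sdiff_subset
        have hJnes : J ≠ s := by
          intro h
          have : i0 ∉ J := fun hi => (Finset.mem_sdiff.mp (hJ hi)).2 (Finset.mem_singleton_self i0)
          exact this (h ▸ hi0)
        have hstrict := hcrit J hJs hJne hJnes
        have hmap : (⨆ i ∈ J, (Vs i).map W.mkQ) = (⨆ i ∈ J, Vs i).map W.mkQ := by
          simp [Submodule.map_iSup]
        have h1' := moshonkin_finrank_map_mkQ W (⨆ i ∈ J, Vs i)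
        have h2' : finrank F ↥(⨆ i ∈ J, Vs i) ≤ finrank F ↥((⨆ i ∈ J, Vs i) ⊔ W) :=
          Submodule.finrank_mono le_sup_left
        rw [hmap]
        omega
      have hsd : (s \ {i0}).card ≤ n := by
        have h5 := Finset.card_sdiff_of_subset (Finset.singleton_subset_iff.mpr hi0)
        have h6 := Finset.card_pos.mpr ⟨i0, hi0⟩
        simp only [Finset.card_singleton] at h5
        omega
      obtain ⟨w, hwV, hwind⟩ := IH (fun i => (Vs i).map W.mkQ) (s \ {i0}) hsd hkey
      have hlift : ∀ j ∈ s \ ({i0} : Finset ι), ∃ x, x ∈ Vs j ∧ W.mkQ x = w j := fun j hj => by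
        simpa [Submodule.mem_map] using hwV j hj
      choose! w' hw'1 hw'2 using hlift
      have hwind' : LinearIndependent F (fun j : ↥(s \ ({i0} : Finset ι)) => W.mkQ (w' j)) := by
        have : (fun j : ↥(s \ ({i0} : Finset ι)) => W.mkQ (w' j)) =
            fun j : ↥(s \ ({i0} : Finset ι)) => w j := by
          funext j; exact hw'2 j j.2
        rw [this]; exact hwind
      refine moshonkin_merge W Vs s {i0} (Finset.singleton_subset_iff.mpr hi0)
        (fun _ => v0) w' ?_ (fun _ _ => Submodule.mem_span_singleton_self v0)
        hvind hw'1 hwind'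
      intro i hi
      rw [Finset.mem_singleton.mp hi]
      exact hv0M

end aux

/-- Moshonkin's linearization of Hall's marriage theorem: a system of linearly
independent representatives of the subspaces `Vs i` exists iff for every subset
`I` of indices, `dim (∑_{i ∈ I} Vs i) ≥ |I|`. -/
theorem moshonkin_hall {F V : Type*} [Field F] [AddCommGroup V] [Module F V]
    [FiniteDimensional F V] (r : ℕ) (Vs : Fin r → Submodule F V) :
    (∃ v : Fin r → V, (∀ i, v i ∈ Vs i) ∧ LinearIndependent F v) ↔
      ∀ I : Finset (Fin r), I.card ≤ Module.finrank F ↥(⨆ i ∈ I, Vs i) := by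
  constructor
  · rintro ⟨v, hvV, hvind⟩ I
    set W := ⨆ i ∈ I, Vs i with hW
    have hmem : ∀ i : ↥I, v i ∈ W := fun i =>
      (le_iSup₂ (f := fun i _ => Vs i) (i : Fin r) i.2 : Vs i ≤ W) (hvV i)
    have hg : LinearIndependent F (fun i : ↥I => (⟨v i, hmem i⟩ : ↥W)) := by
      apply LinearIndependent.of_comp W.subtype
      exact hvind.comp Subtype.val Subtype.val_injective
    have := hg.fintype_card_le_finrank
    simpa using this
  · intro h
    obtain ⟨v, hvV, hvind⟩ := moshonkin_aux r Vs Finset.univ (by simp)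
      (fun I _ => h I)
    refine ⟨v, fun i => hvV i (Finset.mem_univ i), ?_⟩
    have := (linearIndependent_equiv
      (Equiv.subtypeUnivEquiv (fun x => Finset.mem_univ x)).symm).mpr hvind
    exact this
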